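/- Let α₀,α₁,α₂,α₃,α₄ be real parameters with α₃ = α₄, and let y, z : I → ℝ be three-times differentiable functions on an open interval I ⊆ (0,1) containing 1/2, solving the Hamiltonian system (9) with y(1/2) = 1/2 and z(1/2) = 0. Then y'(1/2) = 1 − α₀, z'(1/2) = 4α₂(α₁+α₂), y''(1/2) = 0, and z''(1/2) = 0. -/

import Mathlib

/-- `(y, z)` is a (differentiable) real solution of the Hamiltonian system (9) with
parameters `(a0, a1, a2, a3, a4)` on the set `I ⊆ ℝ`. -/
def IsRealHamSol (a0 a1 a2 a3 a4 : ℝ) (I : Set ℝ) (y z : ℝ → ℝ) : Prop :=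
  ∀ t ∈ I, DifferentiableAt ℝ y t ∧ DifferentiableAt ℝ z t ∧
    t * (t - 1) * deriv y t =
      2 * y t * (y t - 1) * (y t - t) * z t - (a0 - 1) * y t * (y t - 1)
        - a3 * y t * (y t - t) - a4 * (y t - 1) * (y t - t) ∧
    t * (t - 1) * deriv z t =
      -(y t * (y t - 1) + (y t - 1) * (y t - t) + y t * (y t - t)) * z t ^ 2
        + ((2 * y t - 1) * (a0 - 1) + (2 * y t - t) * a3 + (2 * y t - t - 1) * a4) * z t
        - (a1 + a2) * a2

/-- **Initial Taylor coefficients of the symmetric solution (S2-1).** Let `α₃ = α₄` and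
let `(y, z)` be a three-times differentiable solution of the Hamiltonian system (9) on an
open interval `I ⊆ (0,1)` containing `1/2`, with `y(1/2) = 1/2` and `z(1/2) = 0`. Then
`y'(1/2) = 1 - α₀`, `z'(1/2) = 4α₂(α₁+α₂)`, `y''(1/2) = 0`, and `z''(1/2) = 0`. -/
theorem taylor_coefficients_S21 (a0 a1 a2 a3 a4 : ℝ) (h34 : a3 = a4)
    (I : Set ℝ) (hIopen : IsOpen I) (hIconn : I.OrdConnected)
    (hIsub : I ⊆ Set.Ioo (0 : ℝ) 1) (hhalf : (1 / 2 : ℝ) ∈ I)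
    (y z : ℝ → ℝ)
    (hsmooth : ∀ t ∈ I,
      DifferentiableAt ℝ y t ∧ DifferentiableAt ℝ (deriv y) t ∧
        DifferentiableAt ℝ (deriv (deriv y)) t ∧
      DifferentiableAt ℝ z t ∧ DifferentiableAt ℝ (deriv z) t ∧
        DifferentiableAt ℝ (deriv (deriv z)) t)
    (hyz : IsRealHamSol a0 a1 a2 a3 a4 I y z)
    (hy0 : y (1 / 2) = 1 / 2) (hz0 : z (1 / 2) = 0) :
    deriv y (1 / 2) = 1 - a0 ∧
      deriv z (1 / 2) = 4 * a2 * (a1 + a2) ∧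
      deriv (deriv y) (1 / 2) = 0 ∧
      deriv (deriv z) (1 / 2) = 0 := by
  obtain ⟨hy_d, hy'_d, -, hz_d, hz'_d, -⟩ := hsmooth (1/2) hhalf
  obtain ⟨-, -, e1, e2⟩ := hyz (1/2) hhalf
  rw [hy0, hz0] at e1 e2
  have Hy1 : deriv y (1/2) = 1 - a0 := by nlinarith [e1]
  have Hz1 : deriv z (1/2) = 4 * a2 * (a1 + a2) := by nlinarith [e2]
  have hy : HasDerivAt y (deriv y (1/2)) (1/2) := hy_d.hasDerivAt
  have hdy : HasDerivAt (deriv y) (deriv (deriv y) (1/2)) (1/2) := hy'_d.hasDerivAt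
  have hz : HasDerivAt z (deriv z (1/2)) (1/2) := hz_d.hasDerivAt
  have hdz : HasDerivAt (deriv z) (deriv (deriv z) (1/2)) (1/2) := hz'_d.hasDerivAt
  have hId : HasDerivAt (fun t : ℝ => t) 1 (1/2 : ℝ) := hasDerivAt_id' _
  have hnhds : I ∈ nhds (1/2 : ℝ) := hIopen.mem_nhds hhalf
  -- equation 1, differentiated
  have hL1 := (hId.mul (hId.sub_const 1)).mul hdy
  have hR1 := (((((hy.const_mul 2).mul (hy.sub_const 1)).mul (hy.sub hId)).mul hz).sub
      ((hy.const_mul (a0 - 1)).mul (hy.sub_const 1))).sub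
      ((hy.const_mul a3).mul (hy.sub hId)) |>.sub
      (((hy.sub_const 1).const_mul a4).mul (hy.sub hId))
  have heq1 : (fun t => t * (t - 1) * deriv y t) =ᶠ[nhds (1/2 : ℝ)]
      (fun t => 2 * y t * (y t - 1) * (y t - t) * z t - (a0 - 1) * y t * (y t - 1)
        - a3 * y t * (y t - t) - a4 * (y t - 1) * (y t - t)) := by
    filter_upwards [hnhds] with t ht
    exact (hyz t ht).2.2.1
  have key1 := hL1.unique (hR1.congr_of_eventuallyEq heq1)
  rw [hy0, hz0, Hy1] at key1
  have Hy2 : deriv (deriv y) (1/2) = 0 := by rw [h34] at key1; simp only [Pi.mul_apply, Pi.sub_apply, Pi.add_apply, Pi.neg_apply, Pi.pow_apply, hy0, hz0] at key1; ring_nf at key1 ⊢; linarith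
  -- equation 2, differentiated
  have hL2 := (hId.mul (hId.sub_const 1)).mul hdz
  have hR2 := ((((hy.mul (hy.sub_const 1)).add ((hy.sub_const 1).mul (hy.sub hId))).add
        (hy.mul (hy.sub hId))).neg.mul (hz.pow 2)).add
      (((((hy.const_mul 2).sub_const 1).mul_const (a0 - 1)).add
          (((hy.const_mul 2).sub hId).mul_const a3) |>.add
          ((((hy.const_mul 2).sub hId).sub_const 1).mul_const a4)).mul hz) |>.sub_const
      ((a1 + a2) * a2)
  have heq2 : (fun t => t * (t - 1) * deriv z t) =ᶠ[nhds (1/2 : ℝ)]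
      (fun t => -(y t * (y t - 1) + (y t - 1) * (y t - t) + y t * (y t - t)) * z t ^ 2
        + ((2 * y t - 1) * (a0 - 1) + (2 * y t - t) * a3 + (2 * y t - t - 1) * a4) * z t
        - (a1 + a2) * a2) := by
    filter_upwards [hnhds] with t ht
    exact (hyz t ht).2.2.2
  have key2 := hL2.unique (hR2.congr_of_eventuallyEq heq2)
  rw [hy0, hz0, Hy1, Hz1] at key2
  have Hz2 : deriv (deriv z) (1/2) = 0 := by rw [h34] at key2; simp only [Pi.mul_apply, Pi.sub_apply, Pi.add_apply, Pi.neg_apply, Pi.pow_apply, hy0, hz0] at key2; ring_nf at key2 ⊢; linarith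
  exact ⟨Hy1, Hz1, Hy2, Hz2⟩
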